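/- Let L be a countable first-order language containing a unary predicate U, and let T be an L-theory. For every n ≥ 1 there exist an expanded language L⁺ ⊇ L and an L⁺-theory T⁺ such that for every infinite cardinal β: T has a model of cardinality β^{+n} in which U is interpreted by a set of cardinality β if and only if T⁺ has a model of cardinality β^{+(n+1)} in which U is interpreted by a set of cardinality β. -/

import Mathlib

open FirstOrder Cardinal Set

def gad : FirstOrder.Language.{0,0} where
  Functions := fun k => match k with | 2 => Unit | _ => Empty
  Relations := fun k => match k with | 1 => Unit | 2 => Unit | _ => Empty

def gad.F : gad.Functions 2 := Unit.unit
def gad.V : gad.Relations 1 := Unit.unit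
def gad.r : gad.Relations 2 := Unit.unit

def relativize {L' : FirstOrder.Language.{0,0}} (v : L'.Relations 1) :
    ∀ {k}, L'.BoundedFormula Empty k → L'.BoundedFormula Empty k
  | _, Language.BoundedFormula.falsum => Language.BoundedFormula.falsum
  | _, Language.BoundedFormula.equal t₁ t₂ => Language.BoundedFormula.equal t₁ t₂
  | _, Language.BoundedFormula.rel R ts => Language.BoundedFormula.rel R ts
  | _, Language.BoundedFormula.imp f g => (relativize v f).imp (relativize v g)
  | k, Language.BoundedFormula.all f =>
      ((v.boundedFormula₁ (Language.Term.var (Sum.inr (Fin.last k)))).imp (relativize v f)).all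

section Semantic

variable {L : FirstOrder.Language.{0,0}} {M' : Type} [(L.sum gad).Structure M']
  {N : Type} [L.Structure N] {j : N → M'}

theorem term_transfer
    (hfun : ∀ {k : ℕ} (f : L.Functions k) (xs : Fin k → N),
      @Language.Structure.funMap (L.sum gad) M' _ k (Sum.inl f) (j ∘ xs)
        = j (Language.Structure.funMap f xs))
    {γ : Type} (t : L.Term γ) (v : γ → N) :
    (Language.LHom.sumInl.onTerm t : (L.sum gad).Term γ).realize (j ∘ v) = j (t.realize v) := by
  induction t with
  | var a => rfl
  | func f ts ih =>
    simp only [Language.LHom.onTerm, Language.Term.realize, Language.LHom.sumInl_onFunction]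
    rw [show (fun i => Language.Term.realize (j ∘ v) (Language.LHom.sumInl.onTerm (ts i)))
        = j ∘ (fun i => Language.Term.realize v (ts i)) from funext fun i => ih i]
    exact hfun f _

theorem relativize_realize
    (hfun : ∀ {k : ℕ} (f : L.Functions k) (xs : Fin k → N),
      @Language.Structure.funMap (L.sum gad) M' _ k (Sum.inl f) (j ∘ xs)
        = j (Language.Structure.funMap f xs))
    (hrel : ∀ {k : ℕ} (R : L.Relations k) (xs : Fin k → N),
      @Language.Structure.RelMap (L.sum gad) M' _ k (Sum.inl R) (j ∘ xs)
        ↔ Language.Structure.RelMap R xs)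
    (hrange : ∀ x : M',
      @Language.Structure.RelMap (L.sum gad) M' _ 1 (Sum.inr gad.V) ![x] ↔ x ∈ Set.range j)
    (hinj : Function.Injective j) :
    ∀ {k : ℕ} (ψ : L.BoundedFormula Empty k) (xs : Fin k → N),
      (relativize (Sum.inr gad.V) (Language.LHom.sumInl.onBoundedFormula ψ)).Realize
        (M := M') Empty.elim (j ∘ xs) ↔ ψ.Realize Empty.elim xs := by
  have hcomp : ∀ {k : ℕ} (xs : Fin k → N),
      (Sum.elim (Empty.elim : Empty → M') (j ∘ xs)) = j ∘ (Sum.elim Empty.elim xs) := by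
    intro k xs
    funext a
    cases a with
    | inl e => exact e.elim
    | inr i => rfl
  intro k ψ
  induction ψ with
  | falsum =>
    intro xs
    simp only [Language.LHom.onBoundedFormula, relativize]
    rfl
  | equal t₁ t₂ =>
    intro xs
    simp only [Language.LHom.onBoundedFormula, Language.Term.bdEqual, relativize]
    show (Language.Term.realize (Sum.elim Empty.elim (j ∘ xs)) (Language.LHom.sumInl.onTerm t₁)
        = Language.Term.realize (Sum.elim Empty.elim (j ∘ xs)) (Language.LHom.sumInl.onTerm t₂))
      ↔ (Language.Term.realize (Sum.elim Empty.elim xs) t₁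
        = Language.Term.realize (Sum.elim Empty.elim xs) t₂)
    rw [hcomp xs, term_transfer hfun, term_transfer hfun]
    exact hinj.eq_iff
  | rel R ts =>
    intro xs
    simp only [Language.LHom.onBoundedFormula, relativize, Language.Relations.boundedFormula,
      Language.LHom.sumInl_onRelation]
    show @Language.Structure.RelMap (L.sum gad) M' _ _ (Sum.inl R)
        (fun i => Language.Term.realize (Sum.elim Empty.elim (j ∘ xs))
          ((Language.LHom.sumInl.onTerm ∘ ts) i))
      ↔ Language.Structure.RelMap R
        (fun i => Language.Term.realize (Sum.elim Empty.elim xs) (ts i))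
    rw [hcomp xs]
    rw [show (fun i => Language.Term.realize (j ∘ Sum.elim Empty.elim xs)
        ((Language.LHom.sumInl.onTerm ∘ ts) i))
        = j ∘ (fun i => Language.Term.realize (Sum.elim Empty.elim xs) (ts i)) from
        funext fun i => term_transfer hfun (ts i) _]
    exact hrel R _
  | imp f g ihf ihg =>
    intro xs
    simp only [Language.LHom.onBoundedFormula, relativize, Language.BoundedFormula.realize_imp]
    rw [ihf xs, ihg xs]
  | all f ihf =>
    intro xs
    simp only [Language.LHom.onBoundedFormula, relativize, Language.BoundedFormula.realize_all,
      Language.BoundedFormula.realize_imp, Language.BoundedFormula.realize_rel₁,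
      Language.Term.realize_var, Sum.elim_inr, Fin.snoc_last]
    constructor
    · intro h b
      have hb := h (j b) (by
        erw [Language.BoundedFormula.realize_rel₁]
        rw [Language.Term.realize_var, Sum.elim_inr, Fin.snoc_last]
        exact (hrange (j b)).mpr ⟨b, rfl⟩)
      rw [show Fin.snoc (j ∘ xs) (j b) = j ∘ Fin.snoc xs b from (Fin.comp_snoc j xs b).symm] at hb
      exact (ihf _).mp hb
    · intro h a ha
      obtain ⟨b, rfl⟩ := (hrange a).mp (by
        erw [Language.BoundedFormula.realize_rel₁] at ha
        rw [Language.Term.realize_var, Sum.elim_inr, Fin.snoc_last] at ha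
        exact ha)
      rw [show Fin.snoc (j ∘ xs) (j b) = j ∘ Fin.snoc xs b from (Fin.comp_snoc j xs b).symm]
      exact (ihf _).mpr (h b)

theorem relativize_realize_sentence
    (hfun : ∀ {k : ℕ} (f : L.Functions k) (xs : Fin k → N),
      @Language.Structure.funMap (L.sum gad) M' _ k (Sum.inl f) (j ∘ xs)
        = j (Language.Structure.funMap f xs))
    (hrel : ∀ {k : ℕ} (R : L.Relations k) (xs : Fin k → N),
      @Language.Structure.RelMap (L.sum gad) M' _ k (Sum.inl R) (j ∘ xs)
        ↔ Language.Structure.RelMap R xs)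
    (hrange : ∀ x : M',
      @Language.Structure.RelMap (L.sum gad) M' _ 1 (Sum.inr gad.V) ![x] ↔ x ∈ Set.range j)
    (hinj : Function.Injective j) (ψ : L.Sentence) :
    (M' ⊨ (relativize (Sum.inr gad.V) (Language.LHom.sumInl.onSentence ψ))) ↔ N ⊨ ψ := by
  have h := relativize_realize hfun hrel hrange hinj ψ default
  unfold Language.Sentence.Realize Language.Formula.Realize Language.LHom.onSentence
    Language.LHom.onFormula
  convert h using 2 <;> apply Subsingleton.elim

end Semantic

section Axioms

variable {L : FirstOrder.Language.{0,0}}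

/-- closure of `V` under an `L`-function symbol (in fact totality of it into `V`). -/
def closureAx {k : ℕ} (f : L.Functions k) : (L.sum gad).Sentence :=
  (Language.Relations.boundedFormula₁ (L := L.sum gad) (Sum.inr gad.V)
    (Language.Term.func (Sum.inl f) (fun i => Language.Term.var (Sum.inr i)))).alls

/-- `U ⊆ V`. -/
def subAx (U : L.Relations 1) : (L.sum gad).Sentence :=
  ((Language.Relations.boundedFormula₁ (L := L.sum gad) (Sum.inl U)
      (Language.Term.var (Sum.inr (0 : Fin 1)))).imp
    (Language.Relations.boundedFormula₁ (L := L.sum gad) (Sum.inr gad.V)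
      (Language.Term.var (Sum.inr (0 : Fin 1))))).alls

/-- the order is total. -/
def totalAx : (L.sum gad).Sentence :=
  ((Language.Relations.boundedFormula₂ (L := L.sum gad) (Sum.inr gad.r)
      (Language.Term.var (Sum.inr (0 : Fin 2))) (Language.Term.var (Sum.inr (1 : Fin 2)))) ⊔
   (Language.Relations.boundedFormula₂ (L := L.sum gad) (Sum.inr gad.r)
      (Language.Term.var (Sum.inr (1 : Fin 2))) (Language.Term.var (Sum.inr (0 : Fin 2))))).alls

/-- `F` takes values in `V`. -/
def franAx : (L.sum gad).Sentence :=
  (Language.Relations.boundedFormula₁ (L := L.sum gad) (Sum.inr gad.V)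
    (Language.Term.func (Sum.inr gad.F)
      ![Language.Term.var (Sum.inr (0 : Fin 2)), Language.Term.var (Sum.inr (1 : Fin 2))])).alls

/-- `F x ·` is injective on `{y | r y x}`. -/
def finjAx : (L.sum gad).Sentence :=
  ((Language.Relations.boundedFormula₂ (L := L.sum gad) (Sum.inr gad.r)
      (Language.Term.var (Sum.inr (1 : Fin 3))) (Language.Term.var (Sum.inr (0 : Fin 3)))).imp
   ((Language.Relations.boundedFormula₂ (L := L.sum gad) (Sum.inr gad.r)
      (Language.Term.var (Sum.inr (2 : Fin 3))) (Language.Term.var (Sum.inr (0 : Fin 3)))).imp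
    (((Language.Term.func (Sum.inr gad.F)
        ![Language.Term.var (Sum.inr (0 : Fin 3)),
          Language.Term.var (Sum.inr (1 : Fin 3))]).bdEqual
      (Language.Term.func (Sum.inr gad.F)
        ![Language.Term.var (Sum.inr (0 : Fin 3)),
          Language.Term.var (Sum.inr (2 : Fin 3))])).imp
     ((Language.Term.var (Sum.inr (1 : Fin 3))).bdEqual
      (Language.Term.var (Sum.inr (2 : Fin 3))))))).alls

/-- The expanded theory. -/
def bigT (U : L.Relations 1) (T : L.Theory) : (L.sum gad).Theory :=
  ((fun σ => relativize (Sum.inr gad.V) (Language.LHom.sumInl.onSentence σ)) '' T)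
  ∪ {σ | ∃ (k : ℕ) (f : L.Functions k), σ = closureAx f}
  ∪ {subAx U, totalAx, franAx, finjAx}

variable {M : Type} [(L.sum gad).Structure M]

theorem realize_closureAx {k : ℕ} (f : L.Functions k) :
    M ⊨ (closureAx f) ↔ ∀ xs : Fin k → M,
      @Language.Structure.RelMap (L.sum gad) M _ 1 (Sum.inr gad.V)
        ![@Language.Structure.funMap (L.sum gad) M _ k (Sum.inl f) xs] := by
  unfold Language.Sentence.Realize closureAx
  rw [Language.BoundedFormula.realize_alls]
  apply forall_congr'
  intro xs
  erw [Language.BoundedFormula.realize_rel₁]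
  exact Iff.rfl

theorem realize_subAx (U : L.Relations 1) :
    M ⊨ (subAx U) ↔ ∀ x : M,
      @Language.Structure.RelMap (L.sum gad) M _ 1 (Sum.inl U) ![x] →
      @Language.Structure.RelMap (L.sum gad) M _ 1 (Sum.inr gad.V) ![x] := by
  unfold Language.Sentence.Realize subAx
  rw [Language.BoundedFormula.realize_alls]
  constructor
  · intro h x
    have := h ![x]
    erw [Language.BoundedFormula.realize_imp, Language.BoundedFormula.realize_rel₁,
      Language.BoundedFormula.realize_rel₁] at this
    exact this
  · intro h xs
    erw [Language.BoundedFormula.realize_imp, Language.BoundedFormula.realize_rel₁,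
      Language.BoundedFormula.realize_rel₁]
    exact h (xs 0)

theorem realize_totalAx :
    M ⊨ (totalAx (L := L)) ↔ ∀ x y : M,
      @Language.Structure.RelMap (L.sum gad) M _ 2 (Sum.inr gad.r) ![x, y] ∨
      @Language.Structure.RelMap (L.sum gad) M _ 2 (Sum.inr gad.r) ![y, x] := by
  unfold Language.Sentence.Realize totalAx
  rw [Language.BoundedFormula.realize_alls]
  constructor
  · intro h x y
    have := h ![x, y]
    erw [Language.BoundedFormula.realize_sup, Language.BoundedFormula.realize_rel₂,
      Language.BoundedFormula.realize_rel₂] at this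
    exact this
  · intro h xs
    erw [Language.BoundedFormula.realize_sup, Language.BoundedFormula.realize_rel₂,
      Language.BoundedFormula.realize_rel₂]
    exact h (xs 0) (xs 1)

theorem realize_franAx :
    M ⊨ (franAx (L := L)) ↔ ∀ x y : M,
      @Language.Structure.RelMap (L.sum gad) M _ 1 (Sum.inr gad.V)
        ![@Language.Structure.funMap (L.sum gad) M _ 2 (Sum.inr gad.F) ![x, y] ] := by
  unfold Language.Sentence.Realize franAx
  rw [Language.BoundedFormula.realize_alls]
  constructor
  · intro h x y
    have := h ![x, y]
    erw [Language.BoundedFormula.realize_rel₁] at this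
    erw [Language.Term.realize_func] at this
    convert this using 3
    funext i
    fin_cases i <;> simp
  · intro h xs
    erw [Language.BoundedFormula.realize_rel₁]
    erw [Language.Term.realize_func]
    have := h (xs 0) (xs 1)
    convert this using 3
    funext i
    fin_cases i <;> simp

theorem realize_finjAx :
    M ⊨ (finjAx (L := L)) ↔ ∀ x y z : M,
      @Language.Structure.RelMap (L.sum gad) M _ 2 (Sum.inr gad.r) ![y, x] →
      @Language.Structure.RelMap (L.sum gad) M _ 2 (Sum.inr gad.r) ![z, x] →
      @Language.Structure.funMap (L.sum gad) M _ 2 (Sum.inr gad.F) ![x, y] =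
        @Language.Structure.funMap (L.sum gad) M _ 2 (Sum.inr gad.F) ![x, z] → y = z := by
  unfold Language.Sentence.Realize finjAx
  rw [Language.BoundedFormula.realize_alls]
  have harg : ∀ (xs : Fin 3 → M) (a b : Fin 3),
      (fun i => Language.Term.realize (Sum.elim (default : Empty → M) xs)
        ((![Language.Term.var (Sum.inr a), Language.Term.var (Sum.inr b)] :
          Fin 2 → (L.sum gad).Term (Empty ⊕ Fin 3)) i)) = ![xs a, xs b] := by
    intro xs a b
    funext i
    fin_cases i <;> simp
  constructor
  · intro h x y z h1 h2 h3
    have := h ![x, y, z]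
    erw [Language.BoundedFormula.realize_imp, Language.BoundedFormula.realize_imp,
      Language.BoundedFormula.realize_imp, Language.BoundedFormula.realize_rel₂,
      Language.BoundedFormula.realize_rel₂, Language.BoundedFormula.realize_bdEqual,
      Language.BoundedFormula.realize_bdEqual] at this
    erw [Language.Term.realize_func, Language.Term.realize_func, harg, harg] at this
    simp only [Matrix.cons_val_zero, Matrix.cons_val_one, Matrix.head_cons,
      Matrix.cons_val_two, Matrix.tail_cons] at this
    exact this h1 h2 h3
  · intro h xs
    erw [Language.BoundedFormula.realize_imp, Language.BoundedFormula.realize_imp,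
      Language.BoundedFormula.realize_imp, Language.BoundedFormula.realize_rel₂,
      Language.BoundedFormula.realize_rel₂, Language.BoundedFormula.realize_bdEqual,
      Language.BoundedFormula.realize_bdEqual]
    erw [Language.Term.realize_func, Language.Term.realize_func, harg, harg]
    intro h1 h2 h3
    exact h (xs 0) (xs 1) (xs 2) (by simpa using h1) (by simpa using h2) (by simpa using h3)

end Axioms


/-- If `D x` are small and any two points are `D`-comparable, then `#X ≤ succ lam`. -/
theorem card_le_succ_of_small_sets {X : Type} {lam : Cardinal.{0}} (hlam : ℵ₀ ≤ lam)
    (D : X → Set X) (hD : ∀ x, #(D x) ≤ lam) (htot : ∀ x y, x ∈ D y ∨ y ∈ D x) :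
    Cardinal.mk X ≤ Order.succ lam := by
  by_contra h
  push_neg at h
  obtain ⟨A₀, hA₀⟩ := Cardinal.le_mk_iff_exists_set.mp h.le
  set A : ℕ → Set X := fun m => Nat.rec A₀ (fun _ S => S ∪ ⋃ x ∈ S, D x) m with hA
  have hAsucc : ∀ m, A (m + 1) = A m ∪ ⋃ x ∈ A m, D x := fun m => rfl
  have hcard : ∀ m, #(A m) ≤ Order.succ lam := by
    intro m
    induction m with
    | zero => exact hA₀.le
    | succ m ih =>
      rw [hAsucc]
      refine (Cardinal.mk_union_le _ _).trans ?_
      have h2 : #(⋃ x ∈ A m, D x) ≤ Order.succ lam := by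
        refine (Cardinal.mk_biUnion_le _ _).trans ?_
        have : ⨆ x : A m, #(D x.1) ≤ lam := by
          rcases isEmpty_or_nonempty (A m) with he | hne
          · simp [ciSup_of_empty]
          · exact ciSup_le' fun x => hD x.1
        calc #(A m) * ⨆ x : A m, #(D x.1) ≤ Order.succ lam * lam :=
              mul_le_mul' ih this
          _ ≤ Order.succ lam * Order.succ lam := mul_le_mul' le_rfl (Order.le_succ lam)
          _ = Order.succ lam := by
              rw [Cardinal.mul_eq_self (hlam.trans (Order.le_succ lam))]
      calc #(A m) + #(⋃ x ∈ A m, D x) ≤ Order.succ lam + Order.succ lam :=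
            add_le_add ih h2
        _ = Order.succ lam := by
            rw [Cardinal.add_eq_self (hlam.trans (Order.le_succ lam))]
  set B : Set X := ⋃ m, A m with hB
  have hBcard : #B ≤ Order.succ lam := by
    refine (Cardinal.mk_iUnion_le _).trans ?_
    calc #ℕ * ⨆ m, #(A m) ≤ ℵ₀ * Order.succ lam :=
          mul_le_mul' (by simp) (ciSup_le' hcard)
      _ ≤ Order.succ lam * Order.succ lam :=
          mul_le_mul' (hlam.trans (Order.le_succ lam)) le_rfl
      _ = Order.succ lam := by rw [Cardinal.mul_eq_self (hlam.trans (Order.le_succ lam))]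
  have hBge : Order.succ lam ≤ #B := by
    rw [← hA₀]
    exact Cardinal.mk_le_mk_of_subset (Set.subset_iUnion A 0)
  have hBclosed : ∀ x ∈ B, D x ⊆ B := by
    intro x hx
    obtain ⟨m, hm⟩ := Set.mem_iUnion.mp hx
    intro y hy
    apply Set.mem_iUnion.mpr ⟨m + 1, ?_⟩
    rw [hAsucc]
    exact Or.inr (Set.mem_biUnion hm hy)
  obtain ⟨z, hz⟩ : ∃ z, z ∉ B := by
    by_contra hc
    push_neg at hc
    have : B = Set.univ := Set.eq_univ_of_forall hc
    rw [this, Cardinal.mk_univ] at hBcard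
    exact absurd (hBcard.trans_lt h) (lt_irrefl _)
  have hBsub : B ⊆ D z := by
    intro x hx
    rcases htot x z with h1 | h2
    · exact h1
    · exact absurd (hBclosed x hx h2) hz
  have : Order.succ lam ≤ lam :=
    hBge.trans ((Cardinal.mk_le_mk_of_subset hBsub).trans (hD z))
  exact absurd this (not_le.mpr (Order.lt_succ lam))

/-- Build a total relation with small initial segments and coding functions into `Vset`. -/
theorem exists_gadget (X : Type) (Vset : Set X) (lam : Cardinal.{0}) (hlam : ℵ₀ ≤ lam)
    (hX : #X ≤ Order.succ lam) (hV : lam ≤ #Vset) :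
    ∃ (r : X → X → Prop) (F : X → X → X),
      (∀ x y, r x y ∨ r y x) ∧ (∀ x y, F x y ∈ Vset) ∧
      (∀ x, Set.InjOn (F x) {y | r y x}) := by
  have hVne : Nonempty Vset := by
    rw [← Cardinal.mk_ne_zero_iff]
    intro h0
    rw [h0] at hV
    exact (hlam.trans hV).not_gt aleph0_pos
  obtain ⟨g⟩ : Nonempty (X ↪ (Order.succ lam).ord.ToType) := by
    rw [← Cardinal.le_def, Cardinal.mk_ord_toType]
    exact hX
  set r : X → X → Prop := fun x y => g x ≤ g y with hr
  have htot : ∀ x y, r x y ∨ r y x := fun x y => le_total (g x) (g y)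
  have hsmall : ∀ x : X, #{y | r y x} ≤ lam := by
    intro x
    have h1 : #{y | r y x} ≤ #(Set.Iic (g x)) :=
      Cardinal.mk_le_of_injective (f := fun y : {y | r y x} => (⟨g y.1, y.2⟩ : Set.Iic (g x)))
        (fun a b hab => Subtype.ext (g.injective (congrArg Subtype.val hab)))
    refine h1.trans ?_
    have h2 : Set.Iic (g x) = insert (g x) (Set.Iio (g x)) := by
      ext w; simp [le_iff_lt_or_eq, or_comm]
    rw [h2]
    refine (Cardinal.mk_insert_le).trans ?_
    have h3 : #(Set.Iio (g x)) < Order.succ lam := Cardinal.mk_Iio_ord_toType (g x)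
    have h4 : #(Set.Iio (g x)) ≤ lam := Order.lt_succ_iff.mp h3
    calc #(Set.Iio (g x)) + 1 ≤ lam + lam := add_le_add h4 (one_le_aleph0.trans hlam)
      _ = lam := Cardinal.add_eq_self hlam
  have hemb : ∀ x : X, Nonempty ({y | r y x} ↪ Vset) := by
    intro x
    rw [← Cardinal.le_def]
    exact (hsmall x).trans hV
  have e := fun x => Classical.choice (hemb x)
  classical
  refine ⟨r, fun x y => if h : r y x then ((e x) ⟨y, h⟩ : X) else (Classical.arbitrary Vset : X),
    htot, ?_, ?_⟩
  · intro x y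
    by_cases h : r y x
    · simp only [dif_pos h]; exact ((e x) ⟨y, h⟩).2
    · simp only [dif_neg h]; exact (Classical.arbitrary Vset).2
  · intro x a ha b hb hab
    simp only [Set.mem_setOf_eq] at ha hb
    simp only [dif_pos ha, dif_pos hb] at hab
    have h2 := (e x).injective (Subtype.ext hab)
    exact congrArg Subtype.val h2

theorem comp_vec1 {A B : Type*} (g : A → B) (v : A) : g ∘ ![v] = ![g v] := by
  funext i; fin_cases i; rfl

theorem stmt0' (L : FirstOrder.Language.{0,0}) (hL : L.card ≤ ℵ₀) (U : L.Relations 1)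
    (T : L.Theory) (n : ℕ) (hn : 1 ≤ n) (β : Cardinal.{0}) (hβ : ℵ₀ ≤ β) :
    ((∃ (M : Type) (i : L.Structure M), T.Model M ∧ #M = (Order.succ)^[n] β ∧
        #{x : M | @Language.Structure.RelMap L M i 1 U ![x]} = β) ↔
      (∃ (M : Type) (i : (L.sum gad).Structure M), (bigT U T).Model M ∧
        Cardinal.mk M = (Order.succ)^[n+1] β ∧
        #{x : M | @Language.Structure.RelMap (L.sum gad) M i 1
          (Language.LHom.sumInl.onRelation U) ![x]} = β)) := by
  classical
  have hβn : ℵ₀ ≤ (Order.succ)^[n] β := hβ.trans (Order.le_succ_iterate n β)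
  have hβn1 : (Order.succ)^[n+1] β = Order.succ ((Order.succ)^[n] β) :=
    Function.iterate_succ_apply' _ n β
  constructor
  · rintro ⟨N, iN, hNT, hNcard, hNU⟩
    letI := iN; letI := hNT
    have hNne : Nonempty N := by
      rw [← Cardinal.mk_ne_zero_iff, hNcard]
      exact (aleph0_pos.trans_le hβn).ne'
    let W := ((Order.succ)^[n+1] β).out
    let π : N ⊕ W → N := Sum.elim id (fun _ => Classical.arbitrary N)
    letI iL : L.Structure (N ⊕ W) :=
      { funMap := fun {k} f xs => Sum.inl (Language.Structure.funMap f (π ∘ xs)),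
        RelMap := fun {k} R xs =>
          (∀ i, (xs i).isLeft) ∧ Language.Structure.RelMap R (π ∘ xs) }
    have hMcard : #(N ⊕ W) = (Order.succ)^[n+1] β := by
      rw [Cardinal.mk_sum, Cardinal.lift_id, Cardinal.lift_id, hNcard, Cardinal.mk_out]
      refine Cardinal.add_eq_right (hβn.trans ?_) ?_ <;>
        · rw [hβn1]; exact Order.le_succ _
    let eV : {x : N ⊕ W // x.isLeft} ≃ N :=
      { toFun := fun x => π x.1
        invFun := fun a => ⟨Sum.inl a, rfl⟩
        left_inv := by
          rintro ⟨x, hx⟩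
          cases x with
          | inl a => rfl
          | inr b => simp [Sum.isLeft] at hx
        right_inv := fun a => rfl }
    have hVcard : #{x : N ⊕ W | x.isLeft} = (Order.succ)^[n] β := by
      rw [← hNcard]; exact Cardinal.mk_congr eV
    obtain ⟨r, F, htot, hran, hinjF⟩ := exists_gadget (N ⊕ W) {x | x.isLeft}
      ((Order.succ)^[n] β) hβn (by rw [hMcard, hβn1]) (le_of_eq hVcard.symm)
    letI iG : gad.Structure (N ⊕ W) :=
      { funMap := fun {k} f xs =>
          match k, f with
          | 2, _ => F (xs 0) (xs 1)
          | 0, f => nomatch f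
          | 1, f => nomatch f
          | (m+3), f => nomatch f
        RelMap := fun {k} R xs =>
          match k, R with
          | 1, _ => ((xs 0).isLeft = true)
          | 2, _ => r (xs 0) (xs 1)
          | 0, R => nomatch R
          | (m+3), R => nomatch R }
    letI iSum : (L.sum gad).Structure (N ⊕ W) := Language.sumStructure L gad (N ⊕ W)
    have hfun : ∀ {k : ℕ} (f : L.Functions k) (xs : Fin k → N),
        @Language.Structure.funMap (L.sum gad) (N ⊕ W) iSum k (Sum.inl f) (Sum.inl ∘ xs)
          = Sum.inl (Language.Structure.funMap f xs) := by
      intro k f xs; rfl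
    have hrel : ∀ {k : ℕ} (R : L.Relations k) (xs : Fin k → N),
        @Language.Structure.RelMap (L.sum gad) (N ⊕ W) iSum k (Sum.inl R) (Sum.inl ∘ xs)
          ↔ Language.Structure.RelMap R xs := by
      intro k R xs
      constructor
      · intro h; exact h.2
      · intro h; exact ⟨fun i => rfl, h⟩
    have hrange : ∀ x : N ⊕ W,
        @Language.Structure.RelMap (L.sum gad) (N ⊕ W) iSum 1 (Sum.inr gad.V) ![x]
          ↔ x ∈ Set.range (Sum.inl : N → N ⊕ W) := by
      intro x
      show x.isLeft = true ↔ _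
      rw [Sum.isLeft_iff]
      simp [Set.mem_range, eq_comm]
    have hmodel : (N ⊕ W) ⊨ bigT U T := by
      rw [Language.Theory.model_iff]
      intro σ hσ
      rcases hσ with (hσ | hσ) | hσ
      · obtain ⟨ψ, hψ, rfl⟩ := hσ
        exact (relativize_realize_sentence hfun hrel hrange Sum.inl_injective ψ).mpr
          (T.realize_sentence_of_mem hψ)
      · obtain ⟨k, f, rfl⟩ := hσ
        rw [realize_closureAx]
        intro xs
        rfl
      · rcases hσ with rfl | rfl | rfl | rfl
        · rw [realize_subAx]
          intro x hx
          exact hx.1 0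
        · rw [realize_totalAx]
          intro x y
          exact htot x y
        · rw [realize_franAx]
          intro x y
          exact hran x y
        · rw [realize_finjAx]
          intro x y z h1 h2 h3
          exact hinjF x h1 h2 h3
    have hU' : #{x : N ⊕ W | @Language.Structure.RelMap (L.sum gad) (N ⊕ W) iSum 1
        (Language.LHom.sumInl.onRelation U) ![x]} = β := by
      rw [← hNU]
      refine Cardinal.mk_congr ?_
      refine
        { toFun := fun x => ⟨π x.1, ?_⟩
          invFun := fun a => ⟨Sum.inl a.1, ?_, ?_⟩
          left_inv := ?_
          right_inv := fun a => Subtype.ext rfl }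
      · have h2 := x.2.2
        rwa [comp_vec1] at h2
      · intro i; fin_cases i; rfl
      · rw [comp_vec1]; exact a.2
      · rintro ⟨x, hx⟩
        cases x with
        | inl a => exact Subtype.ext rfl
        | inr b => exact absurd (hx.1 0) (by simp)
    exact ⟨N ⊕ W, iSum, hmodel, hMcard, hU'⟩
  · rintro ⟨M', i', hMT, hMcard, hMU⟩
    letI := i'; letI := hMT
    let Vset : Set M' := {x | @Language.Structure.RelMap (L.sum gad) M' i' 1 (Sum.inr gad.V) ![x]}
    let Uset : Set M' := {x | @Language.Structure.RelMap (L.sum gad) M' i' 1 (Sum.inl U) ![x]}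
    have hMU' : #Uset = β := by
      simp only [Language.LHom.sumInl_onRelation] at hMU
      exact hMU
    have hsub : ∀ x ∈ Uset, x ∈ Vset :=
      (realize_subAx U).mp ((bigT U T).realize_sentence_of_mem (by simp [bigT]))
    have hclos : ∀ {k : ℕ} (f : L.Functions k) (xs : Fin k → M'),
        @Language.Structure.funMap (L.sum gad) M' i' k (Sum.inl f) xs ∈ Vset := by
      intro k f
      exact (realize_closureAx f).mp
        ((bigT U T).realize_sentence_of_mem (Or.inl (Or.inr ⟨k, f, rfl⟩)))
    have htotal := (realize_totalAx (L := L) (M := M')).mp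
      ((bigT U T).realize_sentence_of_mem (by simp [bigT]))
    have hfr := (realize_franAx (L := L) (M := M')).mp
      ((bigT U T).realize_sentence_of_mem (by simp [bigT]))
    have hfi := (realize_finjAx (L := L) (M := M')).mp
      ((bigT U T).realize_sentence_of_mem (by simp [bigT]))
    letI iV : L.Structure (↥Vset) :=
      { funMap := fun {k} f xs =>
          ⟨@Language.Structure.funMap (L.sum gad) M' i' k (Sum.inl f) (fun i => (xs i).1),
            hclos f _⟩
        RelMap := fun {k} R xs =>
          @Language.Structure.RelMap (L.sum gad) M' i' k (Sum.inl R) (fun i => (xs i).1) }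
    have hfun : ∀ {k : ℕ} (f : L.Functions k) (xs : Fin k → ↥Vset),
        @Language.Structure.funMap (L.sum gad) M' i' k (Sum.inl f)
          ((Subtype.val : ↥Vset → M') ∘ xs) = (Language.Structure.funMap f xs : ↥Vset).1 := by
      intro k f xs; rfl
    have hrel : ∀ {k : ℕ} (R : L.Relations k) (xs : Fin k → ↥Vset),
        @Language.Structure.RelMap (L.sum gad) M' i' k (Sum.inl R)
          ((Subtype.val : ↥Vset → M') ∘ xs) ↔ Language.Structure.RelMap R xs := by
      intro k R xs; exact Iff.rfl
    have hrange : ∀ x : M',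
        @Language.Structure.RelMap (L.sum gad) M' i' 1 (Sum.inr gad.V) ![x]
          ↔ x ∈ Set.range (Subtype.val : ↥Vset → M') := by
      intro x
      constructor
      · intro h; exact ⟨⟨x, h⟩, rfl⟩
      · rintro ⟨y, rfl⟩; exact y.2
    have hVT : ↥Vset ⊨ T := by
      rw [Language.Theory.model_iff]
      intro ψ hψ
      exact (relativize_realize_sentence hfun hrel hrange Subtype.val_injective ψ).mp
        ((bigT U T).realize_sentence_of_mem (Or.inl (Or.inl ⟨ψ, hψ, rfl⟩)))
    haveI := hVT
    have hUVcard : β ≤ #Vset := by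
      rw [← hMU']
      exact Cardinal.mk_le_mk_of_subset hsub
    have hVinf : ℵ₀ ≤ #Vset := hβ.trans hUVcard
    have hbound : #M' ≤ Order.succ #Vset := by
      apply card_le_succ_of_small_sets hVinf
        (fun x => {y | @Language.Structure.RelMap (L.sum gad) M' i' 2 (Sum.inr gad.r) ![y, x]})
      · intro x
        refine Cardinal.mk_le_of_injective
          (f := fun y : {y | @Language.Structure.RelMap (L.sum gad) M' i' 2
              (Sum.inr gad.r) ![y, x]} =>
            (⟨@Language.Structure.funMap (L.sum gad) M' i' 2 (Sum.inr gad.F) ![x, y.1],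
              hfr x y.1⟩ : ↥Vset)) ?_
        intro a b hab
        exact Subtype.ext (hfi x a.1 b.1 a.2 b.2 (congrArg Subtype.val hab))
      · intro x y
        exact htotal x y
    have hVge : (Order.succ)^[n] β ≤ #Vset := by
      rw [hMcard, hβn1] at hbound
      exact Order.succ_le_succ_iff.mp hbound
    haveI : Nonempty ↥Vset := by
      rw [← Cardinal.mk_ne_zero_iff]
      exact (aleph0_pos.trans_le hVinf).ne'
    have hscard : #{v : ↥Vset | v.1 ∈ Uset} = β := by
      rw [← hMU']
      refine Cardinal.mk_congr
        { toFun := fun v => ⟨v.1.1, v.2⟩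
          invFun := fun u => ⟨⟨u.1, hsub u.1 u.2⟩, u.2⟩
          left_inv := fun v => Subtype.ext (Subtype.ext rfl)
          right_inv := fun u => Subtype.ext rfl }
    obtain ⟨S, hsS, hScard⟩ := Language.exists_elementarySubstructure_card_eq L
      {v : ↥Vset | v.1 ∈ Uset} ((Order.succ)^[n] β) hβn
      (by rw [Cardinal.lift_id, Cardinal.lift_id, hscard]
          exact Order.le_succ_iterate n β)
      (by rw [Cardinal.lift_id, Cardinal.lift_id]
          exact hL.trans hβn)
      (by rw [Cardinal.lift_id, Cardinal.lift_id]
          exact hVge)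
    · haveI : T.Model ↥S := inferInstance
      refine ⟨↥S, inferInstance, inferInstance, by simpa using hScard, ?_⟩
      have hcond : ∀ x : ↥S, (@Language.Structure.RelMap L ↥S _ 1 U ![x] ↔
          ((x : ↥Vset) : M') ∈ Uset) := by
        intro x
        show @Language.Structure.RelMap (L.sum gad) M' i' 1 (Sum.inl U)
          (fun i : Fin 1 => ((![x] i : ↥Vset) : M')) ↔ _
        rw [show (fun i : Fin 1 => ((![x] i : ↥Vset) : M')) = ![((x : ↥Vset) : M')] from by
          funext i; fin_cases i; rfl]
        exact Iff.rfl
      rw [← hMU']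
      refine Cardinal.mk_congr ?_
      refine
        { toFun := fun x => ⟨((x.1 : ↥Vset) : M'), (hcond x.1).mp x.2⟩
          invFun := fun u => ⟨⟨⟨u.1, hsub u.1 u.2⟩, hsS u.2⟩, (hcond _).mpr u.2⟩
          left_inv := fun x => Subtype.ext (Subtype.ext (Subtype.ext rfl))
          right_inv := fun u => Subtype.ext rfl }

/-- `T` has a model of cardinality `κ` in which the unary predicate `U`
is interpreted by a set of cardinality `lam` (a `(κ, lam)`-model). -/
def HasModelPair (L : FirstOrder.Language.{0,0}) (U : L.Relations 1) (T : L.Theory)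
    (κ lam : Cardinal.{0}) : Prop :=
  ∃ (M : Type) (i : L.Structure M), T.Model M ∧ #M = κ ∧
    #{x : M | @Language.Structure.RelMap L M i 1 U ![x]} = lam

/-- for every countable language `L` with a unary predicate `U`, every
`L`-theory `T` and every `n ≥ 1`, there are an expansion `L⁺ ⊇ L` (given by a language
morphism `φ : L →ᴸ L'`, with `U` corresponding to `φ.onRelation U`) and an `L⁺`-theory `T⁺`
such that for every infinite cardinal `β`, `T` has a `(β^{+n}, β)`-model iff `T⁺` has a
`(β^{+(n+1)}, β)`-model. -/
theorem stmt0 (L : FirstOrder.Language.{0,0}) (hL : L.card ≤ ℵ₀) (U : L.Relations 1)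
    (T : L.Theory) (n : ℕ) (hn : 1 ≤ n) :
    ∃ (L' : FirstOrder.Language.{0,0}) (φ : L →ᴸ L') (T' : L'.Theory),
      ∀ β : Cardinal.{0}, ℵ₀ ≤ β →
        (HasModelPair L U T ((Order.succ)^[n] β) β ↔
          HasModelPair L' (φ.onRelation U) T' ((Order.succ)^[n + 1] β) β) := by
  refine ⟨L.sum gad, Language.LHom.sumInl, bigT U T, ?_⟩
  intro β hβ
  exact stmt0' L hL U T n hn β hβ
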